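/- Let S be a semigroup with a stable minimal ideal, and let C = (I, N) be an IN-pair on S, i.e. I is an ideal and N is a normal subgroup of a maximal subgroup contained in a stable, regular J-class J that is minimal among J-classes of S \ I. Then the relation R_C = Δ_S ∪ ν_N ∪ (I × I) is a congruence on S, where ν_N = S¹(N × N)S¹ ∩ (J × J). -/

import Mathlib

namespace SG

variable {S : Type*} [Semigroup S]

/-- An ideal of a semigroup: a nonempty subset closed under left and right
multiplication by arbitrary elements. -/
def IsIdeal (I : Set S) : Prop :=
  I.Nonempty ∧ ∀ x ∈ I, ∀ a : S, a * x ∈ I ∧ x * a ∈ I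

/-- The minimal ideal: an ideal contained in every ideal. -/
def IsMinIdeal (M : Set S) : Prop :=
  IsIdeal M ∧ ∀ I : Set S, IsIdeal I → M ⊆ I

/-- Every element of the set is regular. -/
def RegularSet (M : Set S) : Prop := ∀ m ∈ M, ∃ y : S, m * y * m = m

/-- `f` is a retraction of the ideal `I` onto the minimal ideal `M`:
a homomorphism `I → M` fixing `M` pointwise. -/
def IsRetraction (I M : Set S) (f : S → S) : Prop :=
  (∀ x ∈ I, f x ∈ M) ∧ (∀ x ∈ I, ∀ y ∈ I, f (x * y) = f x * f y) ∧ ∀ x ∈ M, f x = x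

/-- Green's R relation (via S¹ = `WithOne S`). -/
def GreenR (a b : S) : Prop :=
  (∃ u : WithOne S, (a : WithOne S) * u = (b : WithOne S)) ∧
    ∃ v : WithOne S, (b : WithOne S) * v = (a : WithOne S)

/-- Green's L relation. -/
def GreenL (a b : S) : Prop :=
  (∃ u : WithOne S, u * (a : WithOne S) = (b : WithOne S)) ∧
    ∃ v : WithOne S, v * (b : WithOne S) = (a : WithOne S)

/-- Green's J relation. -/
def GreenJ (a b : S) : Prop :=
  (∃ u v : WithOne S, u * (a : WithOne S) * v = (b : WithOne S)) ∧
    ∃ u v : WithOne S, u * (b : WithOne S) * v = (a : WithOne S)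

/-- Green's H relation. -/
def GreenH (a b : S) : Prop := GreenR a b ∧ GreenL a b

/-- Green's D relation, as R ∘ L. -/
def GreenD (a b : S) : Prop := ∃ c : S, GreenR a c ∧ GreenL c b

/-- A set is stable if for its elements `x`: `xa J x → xa R x` and `ax J x → ax L x`. -/
def StableSet (J : Set S) : Prop :=
  ∀ x ∈ J, ∀ a : S, (GreenJ (x * a) x → GreenR (x * a) x) ∧ (GreenJ (a * x) x → GreenL (a * x) x)

/-- The set is a J-class. -/
def IsJClass (J : Set S) : Prop := ∃ a : S, J = {b | GreenJ a b}

/-- The set is a D-class. -/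
def IsDClass (J : Set S) : Prop := ∃ a : S, J = {b | GreenD a b}

/-- A binary relation is a congruence on the semigroup. -/
def IsCongruence (r : S → S → Prop) : Prop :=
  Equivalence r ∧ ∀ a b c : S, r a b → r (c * a) (c * b) ∧ r (a * c) (b * c)

/-- `N` is a normal subgroup of the subgroup `G` of `S` with identity `e`. -/
def IsNormalIn (N G : Set S) (e : S) : Prop :=
  N ⊆ G ∧ e ∈ N ∧ (∀ x ∈ N, ∀ y ∈ N, x * y ∈ N) ∧
    (∀ x ∈ N, ∃ y ∈ N, x * y = e ∧ y * x = e) ∧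
    ∀ g ∈ G, ∀ g' ∈ G, g * g' = e → g' * g = e → ∀ x ∈ N, g * x * g' ∈ N

/-- The relation ν_N = S¹(N × N)S¹ ∩ (J × J). -/
def Nu (J N : Set S) (a b : S) : Prop :=
  a ∈ J ∧ b ∈ J ∧ ∃ x ∈ N, ∃ y ∈ N, ∃ s t : WithOne S,
    s * (x : WithOne S) * t = (a : WithOne S) ∧ s * (y : WithOne S) * t = (b : WithOne S)

/-- `J` is disjoint from `I` and is minimal among the J-classes of `S \ I`. -/
def MinimalJClassOutside (J I : Set S) : Prop :=
  (∀ a ∈ J, a ∉ I) ∧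
    ∀ b : S, b ∉ I →
      (∃ a ∈ J, ∃ u v : WithOne S, u * (a : WithOne S) * v = (b : WithOne S)) → b ∈ J

end SG

set_option linter.unusedSectionVars false

namespace Stmt9Aux
open SG
variable {S : Type*} [Semigroup S]

open SG
variable {S : Type*} [Semigroup S]

lemma coe_cases (σ : WithOne S) : σ = 1 ∨ ∃ s : S, σ = ↑s := by
  induction σ using WithOne.recOneCoe with
  | one => left; rfl
  | coe s => right; exact ⟨s, rfl⟩

lemma mulc {M : Type*} [Semigroup M] {a b c : M} (h : a * b = c) (z : M) :
    a * (b * z) = c * z := by rw [← mul_assoc, h]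

lemma jrefl (a : S) : GreenJ a a := ⟨⟨1, 1, by simp⟩, ⟨1, 1, by simp⟩⟩

lemma jsymm {a b : S} (h : GreenJ a b) : GreenJ b a := ⟨h.2, h.1⟩

lemma jtrans {a b c : S} (h1 : GreenJ a b) (h2 : GreenJ b c) : GreenJ a c := by
  obtain ⟨⟨u, v, huv⟩, ⟨u', v', huv'⟩⟩ := h1
  obtain ⟨⟨w, z, hwz⟩, ⟨w', z', hwz'⟩⟩ := h2
  refine ⟨⟨w * u, v * z, ?_⟩, ⟨u' * w', z' * v', ?_⟩⟩
  · rw [← huv] at hwz; rw [← hwz]; simp [mul_assoc]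
  · rw [← hwz'] at huv'; rw [← huv']; simp [mul_assoc]

lemma lrefl (a : S) : GreenL a a := ⟨⟨1, by simp⟩, ⟨1, by simp⟩⟩

lemma rrefl (a : S) : GreenR a a := ⟨⟨1, by simp⟩, ⟨1, by simp⟩⟩

lemma lsymm {a b : S} (h : GreenL a b) : GreenL b a := ⟨h.2, h.1⟩

lemma rsymm {a b : S} (h : GreenR a b) : GreenR b a := ⟨h.2, h.1⟩

lemma ltrans {a b c : S} (h1 : GreenL a b) (h2 : GreenL b c) : GreenL a c := by
  obtain ⟨⟨u, hu⟩, ⟨v, hv⟩⟩ := h1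
  obtain ⟨⟨u', hu'⟩, ⟨v', hv'⟩⟩ := h2
  exact ⟨⟨u' * u, by rw [mul_assoc, hu, hu']⟩, ⟨v * v', by rw [mul_assoc, hv', hv]⟩⟩

lemma rtrans {a b c : S} (h1 : GreenR a b) (h2 : GreenR b c) : GreenR a c := by
  obtain ⟨⟨u, hu⟩, ⟨v, hv⟩⟩ := h1
  obtain ⟨⟨u', hu'⟩, ⟨v', hv'⟩⟩ := h2
  exact ⟨⟨u * u', by rw [← mul_assoc, hu, hu']⟩, ⟨v' * v, by rw [← mul_assoc, hv', hv]⟩⟩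

lemma l_to_j {a b : S} (h : GreenL a b) : GreenJ a b := by
  obtain ⟨⟨u, hu⟩, ⟨v, hv⟩⟩ := h
  exact ⟨⟨u, 1, by simpa using hu⟩, ⟨v, 1, by simpa using hv⟩⟩

lemma r_to_j {a b : S} (h : GreenR a b) : GreenJ a b := by
  obtain ⟨⟨u, hu⟩, ⟨v, hv⟩⟩ := h
  exact ⟨⟨1, u, by simpa using hu⟩, ⟨1, v, by simpa using hv⟩⟩


lemma coeL (σ : WithOne S) (x : S) : ∃ p : S, (p : WithOne S) = σ * ↑x := by
  rcases coe_cases σ with rfl | ⟨s₀, rfl⟩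
  · exact ⟨x, by simp⟩
  · exact ⟨s₀ * x, by rw [WithOne.coe_mul]⟩

lemma coeR (x : S) (τ : WithOne S) : ∃ p : S, (p : WithOne S) = ↑x * τ := by
  rcases coe_cases τ with rfl | ⟨t₀, rfl⟩
  · exact ⟨x, by simp⟩
  · exact ⟨x * t₀, by rw [WithOne.coe_mul]⟩

lemma pe_of {e : S} (he : e * e = e) {p : S} (h : GreenL p e) : p * e = p := by
  obtain ⟨v, hv⟩ := h.2
  apply WithOne.coe_inj.mp
  rw [WithOne.coe_mul, ← hv, mul_assoc, ← WithOne.coe_mul, he]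

lemma ep_of {e : S} (he : e * e = e) {q : S} (h : GreenR q e) : e * q = q := by
  obtain ⟨v, hv⟩ := h.2
  apply WithOne.coe_inj.mp
  rw [WithOne.coe_mul, ← hv, ← mul_assoc, ← WithOne.coe_mul, he]

lemma hG_inv {e : S} (he : e * e = e) {g : S} (hg : GreenH g e) :
    ∃ gi : S, GreenH gi e ∧ g * gi = e ∧ gi * g = e := by
  obtain ⟨u, hu⟩ := hg.1.1    -- ↑g * u = ↑e
  obtain ⟨u', hu'⟩ := hg.2.1  -- u' * ↑g = ↑e
  have cge : (g : WithOne S) * ↑e = ↑g := by rw [← WithOne.coe_mul, pe_of he hg.2]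
  have ceg : (e : WithOne S) * ↑g = ↑g := by rw [← WithOne.coe_mul, ep_of he hg.1]
  have cee : (e : WithOne S) * ↑e = ↑e := by rw [← WithOne.coe_mul, he]
  obtain ⟨w, hw⟩ := coeL u e    -- ↑w = u * ↑e
  obtain ⟨w', hw'⟩ := coeL u' e -- ↑w' = u' * ↑e
  refine ⟨e * w, ?_, ?_, ?_⟩
  rotate_left
  · -- g * (e * w) = e
    apply WithOne.coe_inj.mp
    rw [WithOne.coe_mul, WithOne.coe_mul, hw, ← mul_assoc, ← mul_assoc, cge, hu, cee]
  · -- (e * w) * g = e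
    have hgid : ((e * w : S) : WithOne S) = ↑e * u * ↑e := by
      rw [WithOne.coe_mul, hw, ← mul_assoc]
    have hgi'd : ((e * w' : S) : WithOne S) = ↑e * u' * ↑e := by
      rw [WithOne.coe_mul, hw', ← mul_assoc]
    have h1 : g * (e * w) = e := by
      apply WithOne.coe_inj.mp
      rw [WithOne.coe_mul, WithOne.coe_mul, hw, ← mul_assoc, ← mul_assoc, cge, hu, cee]
    have h2 : (e * w') * g = e := by
      apply WithOne.coe_inj.mp
      rw [WithOne.coe_mul, hgi'd, mul_assoc (↑e * u') (↑e) (↑g), ceg, mul_assoc, hu', cee]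
    have hegi : e * (e * w) = e * w := by
      apply WithOne.coe_inj.mp
      rw [WithOne.coe_mul, hgid, ← mul_assoc, ← mul_assoc, cee, ← hgid]
    have hgi'e : (e * w') * e = e * w' := by
      apply WithOne.coe_inj.mp
      rw [WithOne.coe_mul, hgi'd, mul_assoc, cee, ← hgi'd]
    have key : e * w' = e * w :=
      calc e * w' = (e * w') * e := hgi'e.symm
        _ = (e * w') * (g * (e * w)) := by rw [h1]
        _ = ((e * w') * g) * (e * w) := by simp [mul_assoc]
        _ = e * (e * w) := by rw [h2]
        _ = e * w := hegi
    rw [← key]; exact h2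
  · -- GreenH (e*w) e
    have hgid : ((e * w : S) : WithOne S) = ↑e * u * ↑e := by
      rw [WithOne.coe_mul, hw, ← mul_assoc]
    have hgi'd : ((e * w' : S) : WithOne S) = ↑e * u' * ↑e := by
      rw [WithOne.coe_mul, hw', ← mul_assoc]
    have h1 : g * (e * w) = e := by
      apply WithOne.coe_inj.mp
      rw [WithOne.coe_mul, WithOne.coe_mul, hw, ← mul_assoc, ← mul_assoc, cge, hu, cee]
    have h2 : (e * w') * g = e := by
      apply WithOne.coe_inj.mp
      rw [WithOne.coe_mul, hgi'd, mul_assoc (↑e * u') (↑e) (↑g), ceg, mul_assoc, hu', cee]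
    have hegi : e * (e * w) = e * w := by
      apply WithOne.coe_inj.mp
      rw [WithOne.coe_mul, hgid, ← mul_assoc, ← mul_assoc, cee, ← hgid]
    have hgi'e : (e * w') * e = e * w' := by
      apply WithOne.coe_inj.mp
      rw [WithOne.coe_mul, hgi'd, mul_assoc, cee, ← hgi'd]
    have key : e * w' = e * w :=
      calc e * w' = (e * w') * e := hgi'e.symm
        _ = (e * w') * (g * (e * w)) := by rw [h1]
        _ = ((e * w') * g) * (e * w) := by simp [mul_assoc]
        _ = e * (e * w) := by rw [h2]
        _ = e * w := hegi
    have h2' : (e * w) * g = e := by rw [← key]; exact h2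
    constructor
    · exact ⟨⟨↑g, by rw [← WithOne.coe_mul, h2']⟩,
        ⟨u * ↑e, by rw [← mul_assoc, ← hgid]⟩⟩
    · exact ⟨⟨↑g, by rw [← WithOne.coe_mul, h1]⟩,
        ⟨↑e * u', by rw [show (↑e * u') * (↑e : WithOne S) = ↑e * u' * ↑e from rfl, ← hgi'd, key]⟩⟩

end Stmt9Aux

section
open Stmt9Aux

/-- Let `S` be a semigroup with a stable minimal ideal, and `(I, N)` an
IN-pair: `I` an ideal, `N` a normal subgroup of a maximal subgroup contained in a stable
regular J-class `J` minimal among the J-classes of `S \ I`.  Then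
`R_C = Δ_S ∪ ν_N ∪ (I × I)` is a congruence on `S`. -/
theorem stmt9 {S : Type*} [Semigroup S] (M I J N : Set S) (e : S)
    (hM : SG.IsMinIdeal M) (hMs : SG.StableSet M)
    (hI : SG.IsIdeal I)
    (hJ : SG.IsJClass J) (hJs : SG.StableSet J) (hJr : SG.RegularSet J)
    (hmin : SG.MinimalJClassOutside J I)
    (he : e * e = e) (heJ : e ∈ J)
    (hN : SG.IsNormalIn N {x : S | SG.GreenH x e} e) :
    SG.IsCongruence (fun a b : S => a = b ∨ SG.Nu J N a b ∨ (a ∈ I ∧ b ∈ I)) := by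
  classical
  obtain ⟨a₁, hJeq⟩ := hJ
  have memJ : ∀ z : S, z ∈ J ↔ SG.GreenJ e z := by
    have he1 : SG.GreenJ a₁ e := by rw [hJeq] at heJ; exact heJ
    intro z
    constructor
    · intro hz; rw [hJeq] at hz; exact jtrans (jsymm he1) hz
    · intro hz; rw [hJeq]; exact jtrans he1 hz
  have jj : ∀ {p q : S}, p ∈ J → q ∈ J → SG.GreenJ p q := fun hp hq =>
    jtrans (jsymm ((memJ _).mp hp)) ((memJ _).mp hq)
  have hGJ : ∀ {x : S}, SG.GreenH x e → x ∈ J := fun hx =>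
    (memJ _).mpr (jsymm (r_to_j hx.1))
  -- `between` : if b ∈ J sits below p which sits below z ∈ J, then p ∈ J
  have between : ∀ (b p z : S) (α β γ δ : WithOne S), b ∈ J → z ∈ J →
      (↑b : WithOne S) = α * ↑p * β → (↑p : WithOne S) = γ * ↑z * δ → p ∈ J := by
    intro b p z α β γ δ hb hz hbp hpz
    apply (memJ p).mpr
    constructor
    · obtain ⟨⟨u₀, v₀, h₀⟩, -⟩ := (memJ z).mp hz
      exact ⟨γ * u₀, v₀ * δ, by rw [hpz, ← h₀]; simp [mul_assoc]⟩
    · obtain ⟨-, u₁, v₁, h₁⟩ := (memJ b).mp hb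
      exact ⟨u₁ * α, β * v₁, by rw [← h₁, hbp]; simp [mul_assoc]⟩
  -- stability
  have stabL : ∀ (p y : S) (σ : WithOne S), p ∈ J → y ∈ J →
      (↑p : WithOne S) = σ * ↑y → SG.GreenL p y := by
    intro p y σ hp hy h
    rcases coe_cases σ with rfl | ⟨s₀, rfl⟩
    · rw [one_mul] at h; rw [WithOne.coe_inj.mp h]; exact lrefl y
    · have hpe : p = s₀ * y := WithOne.coe_inj.mp (by rw [h, WithOne.coe_mul])
      rw [hpe]; exact (hJs y hy s₀).2 (by rw [← hpe]; exact jj hp hy)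
  have stabR : ∀ (q y : S) (τ : WithOne S), q ∈ J → y ∈ J →
      (↑q : WithOne S) = ↑y * τ → SG.GreenR q y := by
    intro q y τ hq hy h
    rcases coe_cases τ with rfl | ⟨t₀, rfl⟩
    · rw [mul_one] at h; rw [WithOne.coe_inj.mp h]; exact rrefl y
    · have hqe : q = y * t₀ := WithOne.coe_inj.mp (by rw [h, WithOne.coe_mul])
      rw [hqe]; exact (hJs y hy t₀).1 (by rw [← hqe]; exact jj hq hy)
  -- elements of the form e * rr * e which are in J lie in the H-class of e
  have ere_G : ∀ (k : S) (rr : WithOne S), (↑k : WithOne S) = ↑e * rr * ↑e → k ∈ J →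
      SG.GreenH k e := by
    intro k rr hkd hkJ
    rcases coe_cases rr with rfl | ⟨r₀, rfl⟩
    · have hke : k = e := WithOne.coe_inj.mp (by rw [hkd, mul_one, ← WithOne.coe_mul, he])
      rw [hke]; exact ⟨rrefl e, lrefl e⟩
    · have hk : k = e * r₀ * e := WithOne.coe_inj.mp (by rw [hkd]; simp [WithOne.coe_mul])
      have hJke : SG.GreenJ k e := jsymm ((memJ k).mp hkJ)
      constructor
      · have h := (hJs e heJ (r₀ * e)).1
        rw [show e * (r₀ * e) = k by rw [hk, mul_assoc]] at h
        exact h hJke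
      · have h := (hJs e heJ (e * r₀)).2
        rw [show (e * r₀) * e = k by rw [hk]] at h
        exact h hJke
  -- key transfer lemma
  have transfer : ∀ (σ τ : WithOne S) (x y a₀ b₀ : S), x ∈ N → y ∈ N →
      (↑a₀ : WithOne S) = σ * ↑x * τ → (↑b₀ : WithOne S) = σ * ↑y * τ → a₀ ∈ J → b₀ ∈ J := by
    intro σ τ x y a₀ b₀ hx hy ha hb haJ
    have hxG : SG.GreenH x e := hN.1 hx
    have hyG : SG.GreenH y e := hN.1 hy
    have hxJ : x ∈ J := hGJ hxG
    have hyJ : y ∈ J := hGJ hyG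
    obtain ⟨xi, hxiN, hxxi, hxix⟩ := hN.2.2.2.1 x hx
    obtain ⟨yi, hyiN, hyyi, hyiy⟩ := hN.2.2.2.1 y hy
    have cxxi : (x : WithOne S) * ↑xi = ↑e := by rw [← WithOne.coe_mul, hxxi]
    have cxix : (xi : WithOne S) * ↑x = ↑e := by rw [← WithOne.coe_mul, hxix]
    have cyyi : (y : WithOne S) * ↑yi = ↑e := by rw [← WithOne.coe_mul, hyyi]
    have cyiy : (yi : WithOne S) * ↑y = ↑e := by rw [← WithOne.coe_mul, hyiy]
    have cey : (e : WithOne S) * ↑y = ↑y := by rw [← WithOne.coe_mul, ep_of he hyG.1]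
    have cye : (y : WithOne S) * ↑e = ↑y := by rw [← WithOne.coe_mul, pe_of he hyG.2]
    have cex : (e : WithOne S) * ↑x = ↑x := by rw [← WithOne.coe_mul, ep_of he hxG.1]
    have cxe : (x : WithOne S) * ↑e = ↑x := by rw [← WithOne.coe_mul, pe_of he hxG.2]
    obtain ⟨p, hpd⟩ := coeL σ x
    have hpJ : p ∈ J := between a₀ p x 1 τ σ 1 haJ hxJ
      (by rw [one_mul, hpd]; exact ha) (by rw [mul_one]; exact hpd)
    obtain ⟨q, hqd⟩ := coeR x τ
    have hqJ : q ∈ J := between a₀ q x σ 1 1 τ haJ hxJ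
      (by rw [mul_one, hqd, ← mul_assoc]; exact ha) (by rw [one_mul]; exact hqd)
    obtain ⟨p', hp'd⟩ := coeL σ y
    have hpp' : SG.GreenR p p' := by
      refine ⟨⟨↑(xi * y), ?_⟩, ⟨↑(yi * x), ?_⟩⟩
      · rw [hpd, hp'd, WithOne.coe_mul]
        simp only [mul_assoc]
        rw [mulc cxxi, cey]
      · rw [hpd, hp'd, WithOne.coe_mul]
        simp only [mul_assoc]
        rw [mulc cyyi, cex]
    have hp'J : p' ∈ J := (memJ p').mpr (jtrans ((memJ p).mp hpJ) (r_to_j hpp'))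
    have hp'L : SG.GreenL p' y := stabL p' y σ hp'J hyJ hp'd
    obtain ⟨q', hq'd⟩ := coeR y τ
    have hqq' : SG.GreenL q q' := by
      refine ⟨⟨↑(y * xi), ?_⟩, ⟨↑(x * yi), ?_⟩⟩
      · rw [hqd, hq'd, WithOne.coe_mul]
        simp only [mul_assoc]
        rw [mulc cxix, mulc cye]
      · rw [hqd, hq'd, WithOne.coe_mul]
        simp only [mul_assoc]
        rw [mulc cyiy, mulc cxe]
    have hq'J : q' ∈ J := (memJ q').mpr (jtrans ((memJ q).mp hqJ) (l_to_j hqq'))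
    obtain ⟨⟨m', hm'⟩, ⟨m, hm⟩⟩ := hp'L
    have hbp' : (↑b₀ : WithOne S) = ↑p' * τ := by rw [hb, hp'd]
    have h1 : SG.GreenL b₀ q' := by
      constructor
      · exact ⟨m', by rw [hbp', ← mul_assoc, hm', ← hq'd]⟩
      · exact ⟨m, by rw [hq'd, ← mul_assoc, hm, ← hbp']⟩
    exact (memJ b₀).mpr (jtrans ((memJ q').mp hq'J) (jsymm (l_to_j h1)))
  -- going down from J lands in I or J
  have down : ∀ (w a₀ : S) (σ τ : WithOne S), a₀ ∈ J →
      (↑w : WithOne S) = σ * ↑a₀ * τ → w ∈ I ∨ w ∈ J := by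
    intro w a₀ σ τ ha h
    by_cases hw : w ∈ I
    · exact Or.inl hw
    · exact Or.inr (hmin.2 w hw ⟨a₀, ha, σ, τ, h.symm⟩)
  have nuStep : ∀ (x y w w' : S) (σ τ : WithOne S), x ∈ N → y ∈ N →
      (↑w : WithOne S) = σ * ↑x * τ → (↑w' : WithOne S) = σ * ↑y * τ →
      (w ∈ J ∧ w' ∈ J) ∨ (w ∉ J ∧ w' ∉ J) := by
    intro x y w w' σ τ hx hy hw hw'
    by_cases h1 : w ∈ J
    · exact Or.inl ⟨h1, transfer σ τ x y w w' hx hy hw hw' h1⟩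
    · exact Or.inr ⟨h1, fun h2 => h1 (transfer σ τ y x w' w hy hx hw' hw h2)⟩
  -- transitivity of ν
  have nu_trans : ∀ a b c : S, SG.Nu J N a b → SG.Nu J N b c → SG.Nu J N a c := by
    intro a b c hab hbc
    obtain ⟨haJ, hbJ, x, hx, y, hy, s, t, hsa, hsb⟩ := hab
    obtain ⟨-, hcJ, x', hx', y', hy', s', t', hsb', hsc⟩ := hbc
    obtain ⟨yi, hyiN, hyyi, hyiy⟩ := hN.2.2.2.1 y hy
    obtain ⟨xi', hxi'N, hxxi', hxi'x⟩ := hN.2.2.2.1 x' hx'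
    have hxG : SG.GreenH x e := hN.1 hx
    have hyG : SG.GreenH y e := hN.1 hy
    have hx'G : SG.GreenH x' e := hN.1 hx'
    have hy'G : SG.GreenH y' e := hN.1 hy'
    have hyiG : SG.GreenH yi e := hN.1 hyiN
    have hxi'G : SG.GreenH xi' e := hN.1 hxi'N
    -- coe-level single identities
    have cyyi : (y : WithOne S) * ↑yi = ↑e := by rw [← WithOne.coe_mul, hyyi]
    have cyiy : (yi : WithOne S) * ↑y = ↑e := by rw [← WithOne.coe_mul, hyiy]
    have cx'xi' : (x' : WithOne S) * ↑xi' = ↑e := by rw [← WithOne.coe_mul, hxxi']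
    have cxi'x' : (xi' : WithOne S) * ↑x' = ↑e := by rw [← WithOne.coe_mul, hxi'x]
    have cex : (e : WithOne S) * ↑x = ↑x := by rw [← WithOne.coe_mul, ep_of he hxG.1]
    have cxe : (x : WithOne S) * ↑e = ↑x := by rw [← WithOne.coe_mul, pe_of he hxG.2]
    have cey' : (e : WithOne S) * ↑y' = ↑y' := by rw [← WithOne.coe_mul, ep_of he hy'G.1]
    have cy'e : (y' : WithOne S) * ↑e = ↑y' := by rw [← WithOne.coe_mul, pe_of he hy'G.2]
    -- the four corner elements
    obtain ⟨p, hpd⟩ := coeL s y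
    obtain ⟨q, hqd⟩ := coeR y t
    obtain ⟨p', hp'd⟩ := coeL s' x'
    obtain ⟨q', hq'd⟩ := coeR x' t'
    have hpJ : p ∈ J := between b p y 1 t s 1 hbJ (hGJ hyG)
      (by rw [one_mul, hpd]; exact hsb.symm) (by rw [mul_one]; exact hpd)
    have hqJ : q ∈ J := between b q y s 1 1 t hbJ (hGJ hyG)
      (by rw [mul_one, hqd, ← mul_assoc]; exact hsb.symm) (by rw [one_mul]; exact hqd)
    have hp'J : p' ∈ J := between b p' x' 1 t' s' 1 hbJ (hGJ hx'G)
      (by rw [one_mul, hp'd]; exact hsb'.symm) (by rw [mul_one]; exact hp'd)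
    have hq'J : q' ∈ J := between b q' x' s' 1 1 t' hbJ (hGJ hx'G)
      (by rw [mul_one, hq'd, ← mul_assoc]; exact hsb'.symm) (by rw [one_mul]; exact hq'd)
    have hpL : SG.GreenL p y := stabL p y s hpJ (hGJ hyG) hpd
    have hqR : SG.GreenR q y := stabR q y t hqJ (hGJ hyG) hqd
    have hp'L : SG.GreenL p' x' := stabL p' x' s' hp'J (hGJ hx'G) hp'd
    have hq'R : SG.GreenR q' x' := stabR q' x' t' hq'J (hGJ hx'G) hq'd
    have hpe : p * e = p := pe_of he (ltrans hpL hyG.2)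
    have heq : e * q = q := ep_of he (rtrans hqR hyG.1)
    have hp'e : p' * e = p' := pe_of he (ltrans hp'L hx'G.2)
    have heq' : e * q' = q' := ep_of he (rtrans hq'R hx'G.1)
    have cpe : (p : WithOne S) * ↑e = ↑p := by rw [← WithOne.coe_mul, hpe]
    have ceq : (e : WithOne S) * ↑q = ↑q := by rw [← WithOne.coe_mul, heq]
    have cp'e : (p' : WithOne S) * ↑e = ↑p' := by rw [← WithOne.coe_mul, hp'e]
    have ceq' : (e : WithOne S) * ↑q' = ↑q' := by rw [← WithOne.coe_mul, heq']
    -- b = p * yi * q = p' * xi' * q'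
    have hbpq : p * yi * q = b := by
      apply WithOne.coe_inj.mp
      rw [WithOne.coe_mul, WithOne.coe_mul, hpd, hqd]
      simp only [mul_assoc]
      rw [mulc cyiy]
      rw [show (y : WithOne S) * (↑e * t) = ↑y * t from mulc (by rw [← WithOne.coe_mul, pe_of he hyG.2] : (y : WithOne S) * ↑e = ↑y) t]
      rw [← mul_assoc]; exact hsb
    have hbp'q' : p' * xi' * q' = b := by
      apply WithOne.coe_inj.mp
      rw [WithOne.coe_mul, WithOne.coe_mul, hp'd, hq'd]
      simp only [mul_assoc]
      rw [mulc cxi'x']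
      rw [show (x' : WithOne S) * (↑e * t') = ↑x' * t' from mulc (by rw [← WithOne.coe_mul, pe_of he hx'G.2] : (x' : WithOne S) * ↑e = ↑x') t']
      rw [← mul_assoc]; exact hsb'
    -- Green relations among the corners
    have hbRp : SG.GreenR b p := by
      have h := (hJs p hpJ (yi * q)).1
      rw [show p * (yi * q) = b by rw [← mul_assoc]; exact hbpq] at h
      exact h (jj hbJ hpJ)
    have hbRp' : SG.GreenR b p' := by
      have h := (hJs p' hp'J (xi' * q')).1
      rw [show p' * (xi' * q') = b by rw [← mul_assoc]; exact hbp'q'] at h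
      exact h (jj hbJ hp'J)
    have hbLq : SG.GreenL b q := by
      have h := (hJs q hqJ (p * yi)).2
      rw [show (p * yi) * q = b from hbpq] at h
      exact h (jj hbJ hqJ)
    have hbLq' : SG.GreenL b q' := by
      have h := (hJs q' hq'J (p' * xi')).2
      rw [show (p' * xi') * q' = b from hbp'q'] at h
      exact h (jj hbJ hq'J)
    have hpp' : SG.GreenR p p' := rtrans (rsymm hbRp) hbRp'
    have hqq' : SG.GreenL q q' := ltrans (lsymm hbLq) hbLq'
    -- k with p * k = p', k in the H-class of e
    obtain ⟨rr, hrr⟩ := hpp'.1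
    obtain ⟨w1, hw1⟩ := coeL rr e
    have hkd : ((e * w1 : S) : WithOne S) = ↑e * rr * ↑e := by
      rw [WithOne.coe_mul, hw1, ← mul_assoc]
    set k := e * w1 with hk_def
    have hpk : p * k = p' := by
      apply WithOne.coe_inj.mp
      rw [WithOne.coe_mul, hkd, ← mul_assoc, ← mul_assoc, cpe, hrr, cp'e]
    have hkJ : k ∈ J := between p' k e ↑p 1 1 (rr * ↑e) hp'J heJ
      (by rw [mul_one, ← WithOne.coe_mul, hpk]) (by rw [hkd, one_mul, mul_assoc])
    have hkG : SG.GreenH k e := ere_G k rr hkd hkJ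
    -- h with h * q = q', h in the H-class of e
    obtain ⟨ll, hll⟩ := hqq'.1
    obtain ⟨w2, hw2⟩ := coeL ll e
    have hhd : ((e * w2 : S) : WithOne S) = ↑e * ll * ↑e := by
      rw [WithOne.coe_mul, hw2, ← mul_assoc]
    set hh := e * w2 with hh_def
    have hhq : hh * q = q' := by
      apply WithOne.coe_inj.mp
      rw [WithOne.coe_mul, hhd, mul_assoc (↑e * ll) (↑e) (↑q), ceq, mul_assoc, hll, ceq']
    have hhJ : hh ∈ J := between q' hh e 1 ↑q 1 (ll * ↑e) hq'J heJ
      (by rw [one_mul, ← WithOne.coe_mul, hhq]) (by rw [hhd, one_mul, mul_assoc])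
    have hhG : SG.GreenH hh e := ere_G hh ll hhd hhJ
    obtain ⟨ki, hkiG, hkki, hkik⟩ := hG_inv he hkG
    have hek : e * k = k := ep_of he hkG.1
    have hhe : hh * e = hh := pe_of he hhG.2
    have heh : e * hh = hh := ep_of he hhG.1
    have hexi' : e * xi' = xi' := ep_of he hxi'G.1
    have heyi : e * yi = yi := ep_of he hyiG.1
    have hyie : yi * e = yi := pe_of he hyiG.2
    -- the middle identity  k * xi' * hh = yi
    obtain ⟨m', hm'⟩ := (ltrans hpL hyG.2).1
    obtain ⟨rq, hrq⟩ := (rtrans hqR hyG.1).1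
    have e1 : (↑p : WithOne S) * ↑(k * xi' * hh) * ↑q = ↑p * ↑yi * ↑q := by
      have L : (↑p : WithOne S) * ↑(k * xi' * hh) * ↑q = ↑b := by
        rw [show (↑p : WithOne S) * ↑(k * xi' * hh) * ↑q = ↑(((p * k) * xi') * (hh * q)) by
          simp [WithOne.coe_mul, mul_assoc]]
        rw [show ((p * k) * xi') * (hh * q) = p' * xi' * q' by rw [hpk, hhq]]
        rw [hbp'q']
      have R : (↑p : WithOne S) * ↑yi * ↑q = ↑b := by
        rw [show (↑p : WithOne S) * ↑yi * ↑q = ↑(p * yi * q) by simp [WithOne.coe_mul, mul_assoc]]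
        rw [hbpq]
      rw [L, R]
    have e2S : e * (k * xi' * hh) * e = e * yi * e := by
      apply WithOne.coe_inj.mp
      rw [WithOne.coe_mul, WithOne.coe_mul, WithOne.coe_mul, WithOne.coe_mul]
      calc (↑e : WithOne S) * ↑(k * xi' * hh) * ↑e
          = (m' * ↑p) * ↑(k * xi' * hh) * (↑q * rq) := by rw [hm', hrq]
        _ = m' * ((↑p : WithOne S) * ↑(k * xi' * hh) * ↑q) * rq := by simp [mul_assoc]
        _ = m' * ((↑p : WithOne S) * ↑yi * ↑q) * rq := by rw [e1]
        _ = (m' * ↑p) * ↑yi * (↑q * rq) := by simp [mul_assoc]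
        _ = (↑e : WithOne S) * ↑yi * ↑e := by rw [hm', hrq]
    have t1 : e * (k * xi' * hh) = k * xi' * hh := by
      rw [mul_assoc k xi' hh, ← mul_assoc e k (xi' * hh), hek]
    have lhsS : e * (k * xi' * hh) * e = k * xi' * hh := by
      rw [t1, mul_assoc (k * xi') hh e, hhe]
    have rhsS : e * yi * e = yi := by rw [heyi, hyie]
    have hmid : k * xi' * hh = yi := by rw [← lhsS, e2S, rhsS]
    -- hence hh = x' * ki * yi
    have step1 : xi' * hh = ki * yi := by
      have h1 : ki * (k * xi' * hh) = ki * yi := by rw [hmid]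
      rw [show ki * (k * xi' * hh) = xi' * hh by
        rw [mul_assoc k xi' hh, ← mul_assoc ki k (xi' * hh), hkik, ← mul_assoc, hexi']] at h1
      exact h1
    -- the final witnesses
    have hnN : xi' * y' * xi' ∈ N := hN.2.2.1 _ (hN.2.2.1 _ hxi'N _ hy') _ hxi'N
    have hmN : k * ((xi' * y' * xi') * x') * ki ∈ N :=
      hN.2.2.2.2 k hkG ki hkiG hkki hkik _ (hN.2.2.1 _ hnN _ hx')
    have hzN : y * (k * ((xi' * y' * xi') * x') * ki) ∈ N := hN.2.2.1 y hy _ hmN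
    -- c = p' * (xi' * y' * xi') * q'
    have hc' : p' * (xi' * y' * xi') * q' = c := by
      apply WithOne.coe_inj.mp
      rw [WithOne.coe_mul, WithOne.coe_mul, WithOne.coe_mul, WithOne.coe_mul, hp'd, hq'd]
      simp only [mul_assoc]
      rw [mulc cx'xi', mulc cey', mulc cxi'x', mulc cy'e]
      rw [← mul_assoc]; exact hsc
    -- u * z * v = c  at the S level
    have hz' : (p * yi) * (y * (k * ((xi' * y' * xi') * x') * ki)) * (yi * q)
        = p' * (xi' * y' * xi') * q' := by
      simp only [mul_assoc]
      rw [mulc hyiy, mulc hek]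
      rw [mulc (show ki * yi = xi' * hh from step1.symm)]
      rw [mul_assoc xi' hh q, hhq]
      rw [mulc hxxi', heq']
      rw [mulc hpk]
    have key1 : ∀ g : S, e * g = g → g * e = g →
        (↑(p * yi) : WithOne S) * ↑g * ↑(yi * q) = s * ↑g * t := by
      intro g hg1 hg2
      have ceg : (e : WithOne S) * ↑g = ↑g := by rw [← WithOne.coe_mul, hg1]
      have cge : (g : WithOne S) * ↑e = ↑g := by rw [← WithOne.coe_mul, hg2]
      rw [WithOne.coe_mul, WithOne.coe_mul, hpd, hqd]
      simp only [mul_assoc]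
      rw [mulc cyiy, mulc cge, mulc cyyi, mulc ceg]
    refine ⟨haJ, hcJ, x, hx, _, hzN, ↑(p * yi), ↑(yi * q), ?_, ?_⟩
    · exact (key1 x (ep_of he hxG.1) (pe_of he hxG.2)).trans hsa
    · rw [← WithOne.coe_mul, ← WithOne.coe_mul]
      rw [show (p * yi) * (y * (k * ((xi' * y' * xi') * x') * ki)) * (yi * q) = c from
        hz'.trans hc']
  -- ν is symmetric
  have nu_symm : ∀ a b : S, SG.Nu J N a b → SG.Nu J N b a := by
    intro a b h
    obtain ⟨haJ, hbJ, x, hx, y, hy, s, t, h1, h2⟩ := h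
    exact ⟨hbJ, haJ, y, hy, x, hx, s, t, h2, h1⟩
  -- assemble the congruence
  constructor
  · constructor
    · intro a; exact Or.inl rfl
    · intro a b h
      rcases h with rfl | h | ⟨h1, h2⟩
      · exact Or.inl rfl
      · exact Or.inr (Or.inl (nu_symm a b h))
      · exact Or.inr (Or.inr ⟨h2, h1⟩)
    · intro a b c hab hbc
      rcases hab with rfl | hab | ⟨ha, hb⟩
      · exact hbc
      · rcases hbc with rfl | hbc | ⟨hb, hc⟩
        · exact Or.inr (Or.inl hab)
        · exact Or.inr (Or.inl (nu_trans a b c hab hbc))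
        · exact absurd hb (hmin.1 b hab.2.1)
      · rcases hbc with rfl | hbc | ⟨hb', hc⟩
        · exact Or.inr (Or.inr ⟨ha, hb⟩)
        · exact absurd hbc.1 fun h => hmin.1 b h hb
        · exact Or.inr (Or.inr ⟨ha, hc⟩)
  · intro a b c hab
    rcases hab with rfl | hab | ⟨ha, hb⟩
    · exact ⟨Or.inl rfl, Or.inl rfl⟩
    · obtain ⟨haJ, hbJ, x, hx, y, hy, s, t, hsa, hsb⟩ := hab
      constructor
      · -- left multiplication
        have e1 : (↑(c * a) : WithOne S) = (↑c * s) * ↑x * t := by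
          rw [WithOne.coe_mul, ← hsa]; simp [mul_assoc]
        have e2 : (↑(c * b) : WithOne S) = (↑c * s) * ↑y * t := by
          rw [WithOne.coe_mul, ← hsb]; simp [mul_assoc]
        rcases nuStep x y (c * a) (c * b) (↑c * s) t hx hy e1 e2 with ⟨h1, h2⟩ | ⟨h1, h2⟩
        · exact Or.inr (Or.inl ⟨h1, h2, x, hx, y, hy, ↑c * s, t, e1.symm, e2.symm⟩)
        · have d1 : c * a ∈ I := by
            rcases down (c * a) a ↑c 1 haJ (by rw [mul_one, WithOne.coe_mul]) with h | h
            · exact h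
            · exact absurd h h1
          have d2 : c * b ∈ I := by
            rcases down (c * b) b ↑c 1 hbJ (by rw [mul_one, WithOne.coe_mul]) with h | h
            · exact h
            · exact absurd h h2
          exact Or.inr (Or.inr ⟨d1, d2⟩)
      · -- right multiplication
        have e1 : (↑(a * c) : WithOne S) = s * ↑x * (t * ↑c) := by
          rw [WithOne.coe_mul, ← hsa]; simp [mul_assoc]
        have e2 : (↑(b * c) : WithOne S) = s * ↑y * (t * ↑c) := by
          rw [WithOne.coe_mul, ← hsb]; simp [mul_assoc]
        rcases nuStep x y (a * c) (b * c) s (t * ↑c) hx hy e1 e2 with ⟨h1, h2⟩ | ⟨h1, h2⟩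
        · exact Or.inr (Or.inl ⟨h1, h2, x, hx, y, hy, s, t * ↑c, e1.symm, e2.symm⟩)
        · have d1 : a * c ∈ I := by
            rcases down (a * c) a 1 ↑c haJ (by rw [one_mul, WithOne.coe_mul]) with h | h
            · exact h
            · exact absurd h h1
          have d2 : b * c ∈ I := by
            rcases down (b * c) b 1 ↑c hbJ (by rw [one_mul, WithOne.coe_mul]) with h | h
            · exact h
            · exact absurd h h2
          exact Or.inr (Or.inr ⟨d1, d2⟩)
    · exact ⟨Or.inr (Or.inr ⟨(hI.2 a ha c).1, (hI.2 b hb c).1⟩),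
        Or.inr (Or.inr ⟨(hI.2 a ha c).2, (hI.2 b hb c).2⟩)⟩

end
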